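/- Let k ≥ 2 and consider the Voronoi partition of Δ_k given by A*_i = { x ∈ Δ_k : x_i = max_{1≤j≤k} x_j }, with separating set S* = { x ∈ Δ_k : ∃ i ≠ j with x_i = x_j = max_{1≤ℓ≤k} x_ℓ }. Then for every ε with 0 < ε ≤ 1/(2k): (1) the ε-neighborhood of S* in Δ_k is exactly S*_ε = Δ_k \ ∪_{i=1}^k { x ∈ Δ_k : x_i > ε√2 + max_{ℓ≠i} x_ℓ }; and (2) μ^{k-1}(S*_ε) = (1 − (1 − ε√2)^{k−1})·μ^{k-1}(Δ_k). -/

import Mathlib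

open MeasureTheory Metric Set
open scoped NNReal ENNReal

private lemma aux_coord_continuous {n : ℕ} (i : Fin n) :
    Continuous (fun x : EuclideanSpace ℝ (Fin n) => x i) :=
  (continuous_apply i).comp (PiLp.continuous_ofLp _ _)

private lemma aux_single_norm {n : ℕ} {i j : Fin n} (hij : i ≠ j) :
    ‖(EuclideanSpace.single j (1:ℝ) - EuclideanSpace.single i 1 :
        EuclideanSpace ℝ (Fin n))‖ = Real.sqrt 2 := by
  rw [EuclideanSpace.norm_eq]
  congr 1
  have h : ∀ l : Fin n,
      ‖(EuclideanSpace.single j (1:ℝ) - EuclideanSpace.single i 1 :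
        EuclideanSpace ℝ (Fin n)) l‖ ^ 2
      = (if l = j then (1:ℝ) else 0) + (if l = i then (1:ℝ) else 0) := by
    intro l
    rw [PiLp.sub_apply, EuclideanSpace.single_apply, EuclideanSpace.single_apply,
      Real.norm_eq_abs, sq_abs]
    by_cases h1 : l = j <;> by_cases h2 : l = i
    · subst h1; subst h2; exact absurd rfl hij
    all_goals simp [h1, h2, hij, Ne.symm hij]
  simp_rw [h]
  rw [Finset.sum_add_distrib, Finset.sum_ite_eq' Finset.univ j (fun _ => (1:ℝ)),
    Finset.sum_ite_eq' Finset.univ i (fun _ => (1:ℝ))]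
  norm_num

/-- lower bound on distances from coordinate differences -/
private lemma aux_dist_lower {n : ℕ} (x y : EuclideanSpace ℝ (Fin n)) {i a : Fin n}
    (hia : i ≠ a) : (x i - x a) - (y i - y a) ≤ Real.sqrt 2 * dist x y := by
  have h2 : (0:ℝ) < Real.sqrt 2 := Real.sqrt_pos.2 (by norm_num)
  rw [dist_eq_norm, EuclideanSpace.norm_eq]
  set u := x - y with hu
  have hua : ∀ l, u l = x l - y l := fun l => PiLp.sub_apply _ _ _ _
  have h1 : u i ^ 2 + u a ^ 2 ≤ ∑ l, ‖u l‖ ^ 2 := by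
    have : ∑ l ∈ ({i, a} : Finset (Fin n)), ‖u l‖ ^ 2 ≤ ∑ l, ‖u l‖ ^ 2 :=
      Finset.sum_le_sum_of_subset_of_nonneg (Finset.subset_univ _)
        (fun l _ _ => by positivity)
    rwa [Finset.sum_pair hia, Real.norm_eq_abs, Real.norm_eq_abs, sq_abs, sq_abs] at this
  have key : (x i - x a) - (y i - y a) = u i - u a := by rw [hua, hua]; ring
  rw [key]
  calc u i - u a ≤ |u i - u a| := le_abs_self _
    _ = Real.sqrt ((u i - u a) ^ 2) := (Real.sqrt_sq_eq_abs _).symm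
    _ ≤ Real.sqrt (2 * ∑ l, ‖u l‖ ^ 2) := by
        apply Real.sqrt_le_sqrt
        nlinarith [sq_nonneg (u i + u a), h1]
    _ = Real.sqrt 2 * Real.sqrt (∑ l, ‖u l‖ ^ 2) := Real.sqrt_mul (by norm_num) _

/-- Part 1 as an auxiliary lemma. -/
private lemma aux_part1 {m : ℕ} (ε : ℝ) (hε : 0 < ε) :
    {x ∈ {x : EuclideanSpace ℝ (Fin (m+2)) | (∀ i, 0 ≤ x i) ∧ ∑ i, x i = 1} |
        infDist x {x ∈ {x : EuclideanSpace ℝ (Fin (m+2)) | (∀ i, 0 ≤ x i) ∧ ∑ i, x i = 1} |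
          ∃ i j : Fin (m+2), i ≠ j ∧ (∀ l, x l ≤ x i) ∧ x i = x j} ≤ ε} =
      {x : EuclideanSpace ℝ (Fin (m+2)) | (∀ i, 0 ≤ x i) ∧ ∑ i, x i = 1} \
        ⋃ i : Fin (m+2), {x ∈ {x : EuclideanSpace ℝ (Fin (m+2)) |
          (∀ i, 0 ≤ x i) ∧ ∑ i, x i = 1} | ∀ l : Fin (m+2), l ≠ i → ε * Real.sqrt 2 + x l < x i} := by
  classical
  set Δ : Set (EuclideanSpace ℝ (Fin (m+2))) := {x | (∀ i, 0 ≤ x i) ∧ ∑ i, x i = 1} with hΔdef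
  set S : Set (EuclideanSpace ℝ (Fin (m+2))) :=
    {x ∈ Δ | ∃ i j : Fin (m+2), i ≠ j ∧ (∀ l, x l ≤ x i) ∧ x i = x j} with hSdef
  have h2 : (0:ℝ) < Real.sqrt 2 := Real.sqrt_pos.2 (by norm_num)
  have hs2 : Real.sqrt 2 * Real.sqrt 2 = 2 := Real.mul_self_sqrt (by norm_num)
  have hSne : S.Nonempty := by
    refine ⟨(WithLp.toLp 2 (fun _ => ((m:ℝ)+2)⁻¹) : EuclideanSpace ℝ (Fin (m+2))), ⟨?_, ?_⟩, 0, 1, ?_, ?_, rfl⟩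
    · intro i; show (0:ℝ) ≤ ((m:ℝ)+2)⁻¹; positivity
    · show ∑ _i : Fin (m+2), ((m:ℝ)+2)⁻¹ = 1
      rw [Finset.sum_const, Finset.card_univ, Fintype.card_fin, nsmul_eq_mul]
      push_cast
      rw [mul_inv_cancel₀ (by positivity)]
    · exact Fin.ne_of_val_ne (by norm_num)
    · intro l; exact le_refl _
  ext x
  simp only [Set.mem_setOf_eq, Set.mem_diff, Set.mem_iUnion, not_exists]
  constructor
  · rintro ⟨hxΔ, hxd⟩
    refine ⟨hxΔ, ?_⟩
    intro i ⟨_, hBi⟩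
    -- x has a strict gap > ε√2 at i; show infDist > ε, contradiction
    have hF : (Finset.univ.erase i).Nonempty := by
      obtain ⟨a, ha⟩ := exists_ne i
      exact ⟨a, Finset.mem_erase.2 ⟨ha, Finset.mem_univ _⟩⟩
    set M := (Finset.univ.erase i).inf' hF (fun l => x i - x l) with hM
    have htM : ε * Real.sqrt 2 < M := by
      rw [Finset.lt_inf'_iff]
      intro l hl
      have := hBi l (Finset.mem_erase.1 hl).1
      linarith
    have hbound : ∀ y ∈ S, M / Real.sqrt 2 ≤ dist x y := by
      rintro y ⟨hyΔ, p, q, hpq, hpmax, hpeq⟩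
      set a : Fin (m+2) := if p = i then q else p with ha
      have hai : a ≠ i := by
        by_cases hpi : p = i
        · rw [ha, if_pos hpi, ← hpi]; exact hpq.symm
        · rw [ha, if_neg hpi]; exact hpi
      have hya : y i ≤ y a := by
        by_cases hpi : p = i
        · rw [ha, if_pos hpi]; exact hpeq ▸ hpmax i
        · rw [ha, if_neg hpi]; exact hpmax i
      have h3 : M ≤ x i - x a := Finset.inf'_le _ (Finset.mem_erase.2 ⟨hai, Finset.mem_univ _⟩)
      have h4 : (x i - x a) - (y i - y a) ≤ Real.sqrt 2 * dist x y :=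
        aux_dist_lower x y (fun h => hai h.symm)
      rw [div_le_iff₀ h2]
      nlinarith
    have hlt : infDist x S < M / Real.sqrt 2 := by
      apply lt_of_le_of_lt hxd
      rw [lt_div_iff₀ h2]
      nlinarith
    obtain ⟨y, hyS, hyd⟩ := (infDist_lt_iff hSne).1 hlt
    exact absurd (hbound y hyS) (not_le.2 hyd)
  · rintro ⟨hxΔ, hxU⟩
    refine ⟨hxΔ, ?_⟩
    -- find max i then second max j
    obtain ⟨i, -, hi⟩ := Finset.exists_max_image Finset.univ x Finset.univ_nonempty
    have hi' : ∀ l, x l ≤ x i := fun l => hi l (Finset.mem_univ _)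
    have hF : (Finset.univ.erase i).Nonempty := by
      obtain ⟨a, ha⟩ := exists_ne i
      exact ⟨a, Finset.mem_erase.2 ⟨ha, Finset.mem_univ _⟩⟩
    obtain ⟨j, hjF, hj⟩ := Finset.exists_max_image (Finset.univ.erase i) x hF
    have hji : j ≠ i := (Finset.mem_erase.1 hjF).1
    have hj' : ∀ l, l ≠ i → x l ≤ x j := fun l hl =>
      hj l (Finset.mem_erase.2 ⟨hl, Finset.mem_univ _⟩)
    set δ := x i - x j with hδ
    have hδ0 : 0 ≤ δ := by have := hi' j; simp [hδ]; linarith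
    have hδt : δ ≤ ε * Real.sqrt 2 := by
      have := hxU i
      simp only [Set.mem_setOf_eq, not_and, not_forall] at this
      obtain ⟨l, hl, hl2⟩ := this hxΔ
      have := hj' l hl
      simp [hδ]; linarith
    set w : EuclideanSpace ℝ (Fin (m+2)) :=
      EuclideanSpace.single j (1:ℝ) - EuclideanSpace.single i 1 with hw
    set y : EuclideanSpace ℝ (Fin (m+2)) := x + (δ/2) • w with hy
    have hyap : ∀ l, y l = x l + (δ/2) * ((if l = j then (1:ℝ) else 0) - (if l = i then 1 else 0)) := by
      intro l
      rw [hy, PiLp.add_apply, PiLp.smul_apply, hw, PiLp.sub_apply,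
        EuclideanSpace.single_apply, EuclideanSpace.single_apply, smul_eq_mul]
    have hyi : y i = x i - δ/2 := by
      rw [hyap i]; simp [hji.symm]; ring
    have hyj : y j = x j + δ/2 := by
      rw [hyap j]; simp [hji]
    have hyother : ∀ l, l ≠ i → l ≠ j → y l = x l := by
      intro l h1 h2; rw [hyap l]; simp [h1, h2]
    have hyij : y i = y j := by rw [hyi, hyj, hδ]; ring
    have hyS : y ∈ S := by
      refine ⟨⟨?_, ?_⟩, i, j, hji.symm, ?_, hyij⟩
      · intro l
        by_cases h1 : l = i
        · subst h1; rw [hyi]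
          have := hxΔ.1 j
          rw [hδ]; linarith
        by_cases h2 : l = j
        · subst h2; rw [hyj]
          have := hxΔ.1 l
          linarith
        · rw [hyother l h1 h2]; exact hxΔ.1 l
      · have : ∑ l, y l = ∑ l, x l
            + ((δ/2) * ∑ l, ((if l = j then (1:ℝ) else 0) - (if l = i then 1 else 0))) := by
          simp_rw [hyap]
          rw [Finset.sum_add_distrib, Finset.mul_sum]
        rw [this, Finset.sum_sub_distrib,
          Finset.sum_ite_eq' Finset.univ j (fun _ => (1:ℝ)),
          Finset.sum_ite_eq' Finset.univ i (fun _ => (1:ℝ)), hxΔ.2]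
        simp
      · intro l
        by_cases h1 : l = i
        · subst h1; exact le_refl _
        by_cases h2 : l = j
        · subst h2; rw [hyij]
        · rw [hyother l h1 h2, hyi]
          have := hj' l h1
          rw [hδ]; linarith
    have hdxy : dist x y ≤ ε := by
      have : dist x y = (δ/2) * Real.sqrt 2 := by
        rw [hy, dist_eq_norm]
        have : x - (x + (δ/2) • w) = -((δ/2) • w) := by abel
        rw [this, norm_neg, norm_smul, hw, aux_single_norm (Ne.symm hji), Real.norm_eq_abs,
          abs_of_nonneg (by linarith)]
      rw [this]
      nlinarith
    exact le_trans (infDist_le_dist_of_mem hyS) hdxy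


private lemma aux_range_null {m : ℕ} {ι : Type} [Fintype ι] (hcard : Fintype.card ι < m + 1)
    (L : (ι → ℝ) →L[ℝ] EuclideanSpace ℝ (Fin (m+2))) (c : EuclideanSpace ℝ (Fin (m+2))) :
    μH[(↑(m+2) : ℝ) - 1] (Set.range fun y => c + L y) = 0 := by
  have hd : ((↑(m+2) : ℝ) - 1) = (((m+1 : ℕ) : ℝ≥0) : ℝ) := by push_cast; ring
  rw [hd]
  apply hausdorffMeasure_of_dimH_lt
  have hlip : LipschitzWith ‖L‖₊ (fun y : ι → ℝ => c + L y) :=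
    LipschitzWith.of_dist_le_mul (fun a b => by
      rw [dist_add_left]; exact L.lipschitz.dist_le_mul a b)
  calc dimH (Set.range fun y : ι → ℝ => c + L y) ≤ dimH (Set.univ : Set (ι → ℝ)) :=
        hlip.dimH_range_le
    _ = Fintype.card ι := Real.dimH_univ_pi ι
    _ < (((m+1 : ℕ) : ℝ≥0) : ℝ≥0∞) := by exact_mod_cast hcard

/-- The pair-coincidence affine slices are null. -/
private lemma aux_pair_null (m : ℕ) (i j : Fin (m+2)) (hij : i ≠ j) :
    μH[(↑(m+2) : ℝ) - 1] {x : EuclideanSpace ℝ (Fin (m+2)) | ∑ l, x l = 1 ∧ x i = x j} = 0 := by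
  classical
  have hcard : Fintype.card {l : Fin (m+2) // l ≠ i ∧ l ≠ j} < m + 1 := by
    have h1 : Finset.filter (fun l => l ≠ i ∧ l ≠ j) Finset.univ
        = ({i, j} : Finset (Fin (m+2)))ᶜ := by
      ext l; simp [not_or]
    rw [Fintype.card_subtype, h1, Finset.card_compl,
      Finset.card_insert_of_notMem (by simp [hij]), Finset.card_singleton, Fintype.card_fin]
    omega
  set L₀ : ({l : Fin (m+2) // l ≠ i ∧ l ≠ j} → ℝ) →ₗ[ℝ] EuclideanSpace ℝ (Fin (m+2)) :=
    { toFun := fun y => (WithLp.toLp 2 (fun l => if h : l ≠ i ∧ l ≠ j then y ⟨l, h⟩ else -(∑ p, y p)/2) :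
        EuclideanSpace ℝ (Fin (m+2)))
      map_add' := by
        intro a b
        ext l
        simp only [PiLp.add_apply, PiLp.toLp_apply]
        by_cases h : l ≠ i ∧ l ≠ j
        · simp [dif_pos h]
        · simp only [dif_neg h, Pi.add_apply, Finset.sum_add_distrib]; ring
      map_smul' := by
        intro r a
        ext l
        simp only [PiLp.smul_apply, RingHom.id_apply, smul_eq_mul, PiLp.toLp_apply]
        by_cases h : l ≠ i ∧ l ≠ j
        · simp [dif_pos h]
        · simp only [dif_neg h, Pi.smul_apply, smul_eq_mul]
          rw [← Finset.mul_sum]; ring } with hL₀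
  set L : ({l : Fin (m+2) // l ≠ i ∧ l ≠ j} → ℝ) →L[ℝ] EuclideanSpace ℝ (Fin (m+2)) :=
    LinearMap.toContinuousLinearMap L₀ with hL
  set c : EuclideanSpace ℝ (Fin (m+2)) :=
    (WithLp.toLp 2 (fun l => if l ≠ i ∧ l ≠ j then (0:ℝ) else 1/2) : EuclideanSpace ℝ (Fin (m+2))) with hc
  apply measure_mono_null _ (aux_range_null hcard L c)
  rintro x ⟨hsum, heq⟩
  refine ⟨fun p => x p.1, ?_⟩
  have hsub : ∑ p : {l : Fin (m+2) // l ≠ i ∧ l ≠ j}, x p.1 = 1 - 2 * x i := by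
    have h2 : ∑ l ∈ Finset.filter (fun l => l ≠ i ∧ l ≠ j) Finset.univ, x l
        = ∑ p : {l : Fin (m+2) // l ≠ i ∧ l ≠ j}, x p.1 :=
      Finset.sum_subtype _ (by simp) _
    have h3 : ∑ l ∈ Finset.filter (fun l => ¬(l ≠ i ∧ l ≠ j)) Finset.univ, x l
        = x i + x j := by
      have h4 : Finset.filter (fun l => ¬(l ≠ i ∧ l ≠ j)) Finset.univ
          = ({i, j} : Finset (Fin (m+2))) := by
        ext l; simp [not_and_or, not_not]; tauto
      rw [h4, Finset.sum_pair hij]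
    have h5 := Finset.sum_filter_add_sum_filter_not Finset.univ
      (fun l => l ≠ i ∧ l ≠ j) x
    rw [h2, h3, hsum] at h5
    rw [← heq] at h5
    linarith
  ext l
  show (c + L _) l = x l
  rw [PiLp.add_apply]
  have hLap : L (fun p => x p.1) l
      = if h : l ≠ i ∧ l ≠ j then x l else -(∑ p : {l : Fin (m+2) // l ≠ i ∧ l ≠ j}, x p.1)/2 := by
    rw [hL, LinearMap.coe_toContinuousLinearMap', hL₀]
    rfl
  rw [hLap]
  by_cases h : l ≠ i ∧ l ≠ j
  · rw [dif_pos h, hc]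
    show (if l ≠ i ∧ l ≠ j then (0:ℝ) else 1/2) + x l = x l
    rw [if_pos h]; ring
  · rw [dif_neg h, hsub, hc]
    show (if l ≠ i ∧ l ≠ j then (0:ℝ) else 1/2) + _ = x l
    rw [if_neg h]
    push_neg at h
    rcases Classical.em (l = i) with h1 | h1
    · subst h1; ring
    · rw [h h1, ← heq]; ring


private lemma aux_fin (m : ℕ) :
    μH[(↑(m+2) : ℝ) - 1] {x : EuclideanSpace ℝ (Fin (m+2)) |
      (∀ i, 0 ≤ x i) ∧ ∑ i, x i = 1} ≠ ⊤ := by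
  classical
  have hd0 : (0:ℝ) ≤ (↑(m+2) : ℝ) - 1 := by push_cast; linarith
  set L₀ : (Fin (m+1) → ℝ) →ₗ[ℝ] EuclideanSpace ℝ (Fin (m+2)) :=
    { toFun := fun y => (WithLp.toLp 2 (fun l => if h : (l:ℕ) < m+1 then y ⟨l, h⟩ else -(∑ p, y p)) :
        EuclideanSpace ℝ (Fin (m+2)))
      map_add' := by
        intro a b
        ext l
        simp only [PiLp.add_apply, PiLp.toLp_apply]
        by_cases h : (l:ℕ) < m+1
        · simp only [dif_pos h, Pi.add_apply]
        · simp only [dif_neg h, Pi.add_apply, Finset.sum_add_distrib]; ring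
      map_smul' := by
        intro r a
        ext l
        simp only [PiLp.smul_apply, RingHom.id_apply, smul_eq_mul, PiLp.toLp_apply]
        by_cases h : (l:ℕ) < m+1
        · simp only [dif_pos h, Pi.smul_apply, smul_eq_mul]
        · simp only [dif_neg h, Pi.smul_apply, smul_eq_mul]
          rw [← Finset.mul_sum]; ring } with hL₀
  set L : (Fin (m+1) → ℝ) →L[ℝ] EuclideanSpace ℝ (Fin (m+2)) :=
    LinearMap.toContinuousLinearMap L₀ with hL
  set c : EuclideanSpace ℝ (Fin (m+2)) :=
    (WithLp.toLp 2 (fun l : Fin (m+2) => if (l:ℕ) < m+1 then (0:ℝ) else 1) : EuclideanSpace ℝ (Fin (m+2))) with hc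
  have hlip : LipschitzWith ‖L‖₊ (fun y : Fin (m+1) → ℝ => c + L y) :=
    LipschitzWith.of_dist_le_mul (fun a b => by
      rw [dist_add_left]; exact L.lipschitz.dist_le_mul a b)
  have hsubset : {x : EuclideanSpace ℝ (Fin (m+2)) | (∀ i, 0 ≤ x i) ∧ ∑ i, x i = 1}
      ⊆ (fun y : Fin (m+1) → ℝ => c + L y) '' (Metric.closedBall 0 1) := by
    rintro x ⟨hx0, hxsum⟩
    refine ⟨fun p => x p.castSucc, ?_, ?_⟩
    · rw [mem_closedBall_zero_iff]
      rw [pi_norm_le_iff_of_nonneg zero_le_one]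
      intro p
      rw [Real.norm_eq_abs, abs_le]
      constructor
      · linarith [hx0 p.castSucc]
      · calc x p.castSucc ≤ ∑ i, x i :=
            Finset.single_le_sum (fun i _ => hx0 i) (Finset.mem_univ _)
          _ = 1 := hxsum
    · have hsum' : ∑ p : Fin (m+1), x p.castSucc = 1 - x (Fin.last (m+1)) := by
        have := Fin.sum_univ_castSucc (fun l : Fin (m+2) => x l)
        rw [hxsum] at this
        linarith
      ext l
      show (c + L _) l = x l
      rw [PiLp.add_apply]
      have hLap : L (fun p => x p.castSucc) l
          = if h : (l:ℕ) < m+1 then x (⟨l, h⟩ : Fin (m+1)).castSucc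
            else -(∑ p : Fin (m+1), x p.castSucc) := by
        rw [hL, LinearMap.coe_toContinuousLinearMap', hL₀]
        rfl
      rw [hLap, hc]
      show (if (l:ℕ) < m+1 then (0:ℝ) else 1) + _ = x l
      by_cases h : (l:ℕ) < m+1
      · rw [if_pos h, dif_pos h]
        have : (⟨l, h⟩ : Fin (m+1)).castSucc = l := by
          apply Fin.ext; rfl
        rw [this]; ring
      · rw [if_neg h, dif_neg h, hsum']
        have : l = Fin.last (m+1) := by
          apply Fin.ext
          have := l.isLt
          simp only [Fin.val_last]
          omega
        rw [this]; ring
  have hcb : μH[(↑(m+2) : ℝ) - 1] (Metric.closedBall (0 : Fin (m+1) → ℝ) 1) ≠ ⊤ := by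
    have hcast : ((↑(m+2) : ℝ) - 1) = ((Fintype.card (Fin (m+1)) : ℕ) : ℝ) := by
      simp only [Fintype.card_fin]; push_cast; ring
    rw [hcast, hausdorffMeasure_pi_real]
    exact (measure_closedBall_lt_top).ne
  have h1 := hlip.hausdorffMeasure_image_le hd0 (Metric.closedBall 0 1)
  have h2 := le_trans (measure_mono hsubset) h1
  exact ne_top_of_le_ne_top (ENNReal.mul_ne_top
    (ENNReal.rpow_ne_top_of_nonneg hd0 ENNReal.coe_ne_top) hcb) h2






private lemma aux_part2 {m : ℕ} (t : ℝ) (ht0 : 0 < t) (ht1 : t < 1) :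
    μH[(↑(m+2) : ℝ) - 1] ({x : EuclideanSpace ℝ (Fin (m+2)) | (∀ i, 0 ≤ x i) ∧ ∑ i, x i = 1} \
        ⋃ i : Fin (m+2), {x ∈ {x : EuclideanSpace ℝ (Fin (m+2)) | (∀ i, 0 ≤ x i) ∧ ∑ i, x i = 1} |
          ∀ l : Fin (m+2), l ≠ i → t + x l < x i}) =
      ENNReal.ofReal (1 - (1 - t)^(m+1)) *
        μH[(↑(m+2) : ℝ) - 1] {x : EuclideanSpace ℝ (Fin (m+2)) | (∀ i, 0 ≤ x i) ∧ ∑ i, x i = 1} := by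
  classical
  set Δ : Set (EuclideanSpace ℝ (Fin (m+2))) := {x | (∀ i, 0 ≤ x i) ∧ ∑ i, x i = 1} with hΔdef
  set A : Fin (m+2) → Set (EuclideanSpace ℝ (Fin (m+2))) :=
    fun i => {x ∈ Δ | ∀ l : Fin (m+2), l ≠ i → x l < x i} with hAdef
  set B : Fin (m+2) → Set (EuclideanSpace ℝ (Fin (m+2))) :=
    fun i => {x ∈ Δ | ∀ l : Fin (m+2), l ≠ i → t + x l < x i} with hBdef
  have hd0 : (0:ℝ) ≤ (↑(m+2) : ℝ) - 1 := by push_cast; linarith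
  have hc'0 : (0:ℝ) < 1 - t := by linarith
  -- measurability
  have hΔclosed : IsClosed Δ := by
    have : Δ = (⋂ i, {x : EuclideanSpace ℝ (Fin (m+2)) | 0 ≤ x i})
        ∩ {x : EuclideanSpace ℝ (Fin (m+2)) | ∑ i, x i = 1} := by
      ext x; simp [hΔdef, Set.mem_iInter]
    rw [this]
    exact (isClosed_iInter fun i =>
        isClosed_le continuous_const (aux_coord_continuous i)).inter
      (isClosed_eq (continuous_finset_sum _ fun i _ => aux_coord_continuous i) continuous_const)
  have hΔmeas : MeasurableSet Δ := hΔclosed.measurableSet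
  have hAmeas : ∀ i, MeasurableSet (A i) := by
    intro i
    have : A i = Δ ∩ ⋂ l, ⋂ (_ : l ≠ i), {x : EuclideanSpace ℝ (Fin (m+2)) | x l < x i} := by
      ext x
      constructor
      · rintro ⟨h1, h2⟩
        exact ⟨h1, Set.mem_iInter.2 fun l => Set.mem_iInter.2 fun hli => h2 l hli⟩
      · rintro ⟨h1, h2⟩
        exact ⟨h1, fun l hli => Set.mem_iInter.1 (Set.mem_iInter.1 h2 l) hli⟩
    rw [this]
    exact hΔmeas.inter (MeasurableSet.iInter fun l => MeasurableSet.iInter fun _ =>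
      measurableSet_lt (aux_coord_continuous l).measurable (aux_coord_continuous i).measurable)
  have hBmeas : ∀ i, MeasurableSet (B i) := by
    intro i
    have : B i = Δ ∩ ⋂ l, ⋂ (_ : l ≠ i), {x : EuclideanSpace ℝ (Fin (m+2)) | t + x l < x i} := by
      ext x
      constructor
      · rintro ⟨h1, h2⟩
        exact ⟨h1, Set.mem_iInter.2 fun l => Set.mem_iInter.2 fun hli => h2 l hli⟩
      · rintro ⟨h1, h2⟩
        exact ⟨h1, fun l hli => Set.mem_iInter.1 (Set.mem_iInter.1 h2 l) hli⟩
    rw [this]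
    exact hΔmeas.inter (MeasurableSet.iInter fun l => MeasurableSet.iInter fun _ =>
      measurableSet_lt (continuous_const.add (aux_coord_continuous l)).measurable
        (aux_coord_continuous i).measurable)
  have hdisjA : Pairwise (Function.onFun Disjoint A) := by
    intro i j hij
    rw [Function.onFun, Set.disjoint_left]
    rintro x ⟨-, hxi⟩ ⟨-, hxj⟩
    have h1 := hxi j hij.symm
    have h2 := hxj i hij
    linarith
  have hdisjB : Pairwise (Function.onFun Disjoint B) := by
    intro i j hij
    rw [Function.onFun, Set.disjoint_left]
    rintro x ⟨-, hxi⟩ ⟨-, hxj⟩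
    have h1 := hxi j hij.symm
    have h2 := hxj i hij
    linarith
  -- homothety
  have hBA : ∀ i, B i =
      (AffineMap.homothety (EuclideanSpace.single i (1:ℝ)) (1 - t)) '' A i := by
    intro i
    set e : EuclideanSpace ℝ (Fin (m+2)) := EuclideanSpace.single i (1:ℝ) with he
    have heap : ∀ l, e l = if l = i then (1:ℝ) else 0 := fun l =>
      EuclideanSpace.single_apply i 1 l
    have happ : ∀ (x : EuclideanSpace ℝ (Fin (m+2))) l,
        (AffineMap.homothety e (1-t)) x l = (1-t) * (x l - e l) + e l := by
      intro x l
      rw [AffineMap.homothety_apply]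
      rw [vsub_eq_sub, vadd_eq_add, PiLp.add_apply, PiLp.smul_apply, PiLp.sub_apply, smul_eq_mul]
    ext y
    constructor
    · rintro ⟨⟨hy0, hysum⟩, hyB⟩
      set x : EuclideanSpace ℝ (Fin (m+2)) :=
        (WithLp.toLp 2 (fun l => (y l - t * e l)/(1-t)) : EuclideanSpace ℝ (Fin (m+2))) with hx
      have hyit : t ≤ y i := by
        obtain ⟨a, ha⟩ := exists_ne i
        have := hyB a ha
        have := hy0 a
        linarith
      refine ⟨x, ⟨⟨?_, ?_⟩, ?_⟩, ?_⟩
      · intro l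
        rw [hx]
        show 0 ≤ (y l - t * e l)/(1-t)
        apply div_nonneg _ (le_of_lt hc'0)
        rw [heap l]
        by_cases h : l = i
        · rw [if_pos h, h]; linarith
        · rw [if_neg h]; have := hy0 l; linarith
      · show ∑ l, (y l - t * e l)/(1-t) = 1
        rw [← Finset.sum_div, Finset.sum_sub_distrib, ← Finset.mul_sum]
        have hesum : ∑ l, e l = 1 := by
          simp_rw [heap]
          rw [Finset.sum_ite_eq' Finset.univ i (fun _ => (1:ℝ))]
          simp
        rw [hesum, hysum]
        field_simp
      · intro l hl
        show (y l - t * e l)/(1-t) < (y i - t * e i)/(1-t)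
        rw [heap l, if_neg hl, heap i, if_pos rfl]
        have h5 := hyB l hl
        rw [div_lt_div_iff₀ hc'0 hc'0]
        nlinarith
      · ext l
        rw [happ x l, hx]
        show (1-t) * ((y l - t * e l)/(1-t) - e l) + e l = y l
        field_simp
        ring
    · rintro ⟨x, ⟨⟨hx0, hxsum⟩, hxmax⟩, rfl⟩
      have hval : ∀ l, (AffineMap.homothety e (1-t)) x l = (1-t) * x l + t * e l := by
        intro l; rw [happ x l]; ring
      refine ⟨⟨?_, ?_⟩, ?_⟩
      · intro l
        rw [hval l, heap l]
        by_cases h : l = i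
        · rw [if_pos h]; have := hx0 l; nlinarith
        · rw [if_neg h]; have := hx0 l; nlinarith
      · show ∑ l, (AffineMap.homothety e (1-t)) x l = 1
        simp_rw [hval]
        rw [Finset.sum_add_distrib, ← Finset.mul_sum, ← Finset.mul_sum]
        have hesum : ∑ l, e l = 1 := by
          simp_rw [heap]
          rw [Finset.sum_ite_eq' Finset.univ i (fun _ => (1:ℝ))]
          simp
        rw [hesum, hxsum]
        ring
      · intro l hl
        rw [hval l, hval i, heap l, heap i, if_neg hl, if_pos rfl]
        have := hxmax l hl
        nlinarith
  -- measure of B i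
  have hμB : ∀ i, μH[(↑(m+2) : ℝ) - 1] (B i)
      = ENNReal.ofReal ((1-t)^(m+1)) * μH[(↑(m+2) : ℝ) - 1] (A i) := by
    intro i
    rw [hBA i, hausdorffMeasure_homothety_image hd0 _ (ne_of_gt hc'0)]
    have h1 : ‖(1-t:ℝ)‖₊ ^ ((↑(m+2) : ℝ) - 1) = Real.toNNReal ((1-t)^(m+1)) := by
      have h2 : ‖(1-t:ℝ)‖₊ = Real.toNNReal (1-t) := by
        apply NNReal.coe_injective
        rw [coe_nnnorm, Real.norm_eq_abs, abs_of_nonneg (le_of_lt hc'0),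
          Real.coe_toNNReal _ (le_of_lt hc'0)]
      have h3 : ((↑(m+2) : ℝ) - 1) = ((m+1 : ℕ) : ℝ) := by push_cast; ring
      rw [h2, h3, NNReal.rpow_natCast, ← Real.toNNReal_pow (le_of_lt hc'0)]
    rw [h1, ENNReal.smul_def, smul_eq_mul, ENNReal.ofReal]
  -- Δ decomposes into the A i up to null sets
  have hμΔ_decomp : μH[(↑(m+2) : ℝ) - 1] Δ = ∑' i, μH[(↑(m+2) : ℝ) - 1] (A i) := by
    have hsubset : (⋃ i, A i) ⊆ Δ := Set.iUnion_subset fun i => Set.sep_subset _ _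
    have hcover : Δ ⊆ (⋃ i, A i) ∪ ⋃ i, ⋃ j, ⋃ (_ : i ≠ j),
        {x : EuclideanSpace ℝ (Fin (m+2)) | ∑ l, x l = 1 ∧ x i = x j} := by
      intro x hx
      by_cases hxA : x ∈ ⋃ i, A i
      · exact Or.inl hxA
      · right
        obtain ⟨i, -, hi⟩ := Finset.exists_max_image Finset.univ x Finset.univ_nonempty
        have hi' : ∀ l, x l ≤ x i := fun l => hi l (Finset.mem_univ _)
        rw [Set.mem_iUnion] at hxA
        push_neg at hxA
        have := hxA i
        rw [hAdef] at this
        simp only [Set.mem_setOf_eq, not_and, not_forall] at this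
        obtain ⟨j, hji, hj⟩ := this hx
        rw [Set.mem_iUnion]
        refine ⟨i, Set.mem_iUnion.2 ⟨j, Set.mem_iUnion.2 ⟨fun h => hji (h.symm), ?_⟩⟩⟩
        exact ⟨hx.2, le_antisymm (not_lt.1 hj) (hi' j)⟩
    have hnull : μH[(↑(m+2) : ℝ) - 1] (⋃ i : Fin (m+2), ⋃ j : Fin (m+2), ⋃ (_ : i ≠ j),
        {x : EuclideanSpace ℝ (Fin (m+2)) | ∑ l, x l = 1 ∧ x i = x j}) = 0 :=
      measure_iUnion_null fun i => measure_iUnion_null fun j =>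
        measure_iUnion_null fun hij => aux_pair_null m i j hij
    have heq : μH[(↑(m+2) : ℝ) - 1] Δ = μH[(↑(m+2) : ℝ) - 1] (⋃ i, A i) := by
      apply le_antisymm
      · calc μH[(↑(m+2) : ℝ) - 1] Δ ≤ μH[(↑(m+2) : ℝ) - 1] ((⋃ i, A i) ∪ _) :=
            measure_mono hcover
          _ ≤ μH[(↑(m+2) : ℝ) - 1] (⋃ i, A i) + _ := measure_union_le _ _
          _ = μH[(↑(m+2) : ℝ) - 1] (⋃ i, A i) := by rw [hnull, add_zero]
      · exact measure_mono hsubset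
    rw [heq, measure_iUnion hdisjA hAmeas]
  have hμU : μH[(↑(m+2) : ℝ) - 1] (⋃ i, B i)
      = ENNReal.ofReal ((1-t)^(m+1)) * μH[(↑(m+2) : ℝ) - 1] Δ := by
    rw [measure_iUnion hdisjB hBmeas]
    simp_rw [hμB]
    rw [ENNReal.tsum_mul_left, ← hμΔ_decomp]
  have hΔfin : μH[(↑(m+2) : ℝ) - 1] Δ ≠ ⊤ := aux_fin m
  have hUfin : μH[(↑(m+2) : ℝ) - 1] (⋃ i, B i) ≠ ⊤ := by
    rw [hμU]; exact ENNReal.mul_ne_top ENNReal.ofReal_ne_top hΔfin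
  have hUsub : (⋃ i, B i) ⊆ Δ := Set.iUnion_subset fun i => Set.sep_subset _ _
  rw [measure_diff hUsub (MeasurableSet.iUnion hBmeas).nullMeasurableSet hUfin, hμU]
  have hp1 : (1-t)^(m+1) ≤ 1 := pow_le_one₀ (le_of_lt hc'0) (by linarith)
  have hp0 : (0:ℝ) ≤ (1-t)^(m+1) := pow_nonneg (le_of_lt hc'0) _
  apply ENNReal.sub_eq_of_eq_add (ENNReal.mul_ne_top ENNReal.ofReal_ne_top hΔfin)
  rw [← add_mul, ← ENNReal.ofReal_add (by linarith) hp0, sub_add_cancel, ENNReal.ofReal_one,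
    one_mul]


/-- For the Voronoi partition `A*_i = {x ∈ Δ_k : x_i = max_j x_j}` of
`Δ_k` (`k ≥ 2`) with separating set `S* = {x ∈ Δ_k : ∃ i ≠ j, x_i = x_j = max_ℓ x_ℓ}`,
for every `0 < ε ≤ 1/(2k)`:
(1) `S*_ε = Δ_k \ ⋃_i {x ∈ Δ_k : x_i > ε√2 + max_{ℓ≠i} x_ℓ}`;
(2) `μH^{k-1}(S*_ε) = (1 − (1 − ε√2)^{k-1})·μH^{k-1}(Δ_k)`. -/
theorem voronoi_separating_set_neighborhood (k : ℕ) (hk : 2 ≤ k)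
    (Δ : Set (EuclideanSpace ℝ (Fin k)))
    (hΔ : Δ = {x : EuclideanSpace ℝ (Fin k) | (∀ i, 0 ≤ x i) ∧ ∑ i, x i = 1})
    (Sstar : Set (EuclideanSpace ℝ (Fin k)))
    (hSstar : Sstar = {x ∈ Δ | ∃ i j : Fin k, i ≠ j ∧
      (∀ l, x l ≤ x i) ∧ x i = x j})
    (ε : ℝ) (hε : 0 < ε) (hεk : ε ≤ 1 / (2 * k)) :
    ({x ∈ Δ | Metric.infDist x Sstar ≤ ε} =
      Δ \ ⋃ i : Fin k, {x ∈ Δ | ∀ l : Fin k, l ≠ i → ε * Real.sqrt 2 + x l < x i}) ∧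
    μH[(k : ℝ) - 1] {x ∈ Δ | Metric.infDist x Sstar ≤ ε} =
      ENNReal.ofReal (1 - (1 - ε * Real.sqrt 2) ^ (k - 1)) * μH[(k : ℝ) - 1] Δ := by
  obtain ⟨m, rfl⟩ : ∃ m, k = m + 2 := ⟨k - 2, by omega⟩
  subst hSstar
  subst hΔ
  have hsq2 : Real.sqrt 2 < 2 := (Real.sqrt_lt' (by norm_num)).2 (by norm_num)
  have hsq0 : (0:ℝ) < Real.sqrt 2 := Real.sqrt_pos.2 (by norm_num)
  have ht0 : 0 < ε * Real.sqrt 2 := by positivity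
  have hm2' : (4:ℝ) ≤ 2 * ((m + 2 : ℕ) : ℝ) := by push_cast; linarith [Nat.cast_nonneg (α := ℝ) m]
  have hεle : ε ≤ 1/4 :=
    le_trans hεk (by
      calc 1 / (2 * ((m + 2 : ℕ) : ℝ)) ≤ 1 / 4 :=
        one_div_le_one_div_of_le (by norm_num) hm2')
  have ht1 : ε * Real.sqrt 2 < 1 := by nlinarith
  refine ⟨aux_part1 ε hε, ?_⟩
  rw [aux_part1 ε hε]
  exact aux_part2 (m := m) (ε * Real.sqrt 2) ht0 ht1
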